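/- Let N₂ = E₁₄. The set {X ∈ sp(4,ℂ) : N₂·X − X·N₂ = 0} is exactly the ℂ-linear span of the six matrices diag(0,1,−1,0), L_{2e1}, L_{e1+e2}, L_{2e2}, L_{−2e2}, L_{e1−e2}, and this subspace has dimension 6 over ℂ. -/
import Mathlib


open Matrix

/-- The matrix `J` defining the symplectic form. -/
def J4 : Matrix (Fin 4) (Fin 4) ℂ :=
  !![0,0,0,1; 0,0,1,0; 0,-1,0,0; -1,0,0,0]

/-- The set `sp(4,ℂ) = {X : Xᵀ·J + J·X = 0}`. -/
def sp4 : Set (Matrix (Fin 4) (Fin 4) ℂ) :=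
  {X | Xᵀ * J4 + J4 * X = 0}

/-- `L_{e1−e2} = E₁₂ − E₃₄`. -/
def Le1me2 : Matrix (Fin 4) (Fin 4) ℂ := !![0,1,0,0; 0,0,0,0; 0,0,0,-1; 0,0,0,0]

/-- `L_{−e1+e2} = E₂₁ − E₄₃`. -/
def Lme1pe2 : Matrix (Fin 4) (Fin 4) ℂ := !![0,0,0,0; 1,0,0,0; 0,0,0,0; 0,0,-1,0]

/-- `L_{e1+e2} = E₁₃ + E₂₄`. -/
def Le1pe2 : Matrix (Fin 4) (Fin 4) ℂ := !![0,0,1,0; 0,0,0,1; 0,0,0,0; 0,0,0,0]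

/-- `L_{−e1−e2} = E₃₁ + E₄₂`. -/
def Lme1me2 : Matrix (Fin 4) (Fin 4) ℂ := !![0,0,0,0; 0,0,0,0; 1,0,0,0; 0,1,0,0]

/-- `L_{2e1} = E₁₄`. -/
def L2e1 : Matrix (Fin 4) (Fin 4) ℂ := !![0,0,0,1; 0,0,0,0; 0,0,0,0; 0,0,0,0]

/-- `L_{−2e1} = E₄₁`. -/
def Lm2e1 : Matrix (Fin 4) (Fin 4) ℂ := !![0,0,0,0; 0,0,0,0; 0,0,0,0; 1,0,0,0]

/-- `L_{2e2} = E₂₃`. -/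
def L2e2 : Matrix (Fin 4) (Fin 4) ℂ := !![0,0,0,0; 0,0,1,0; 0,0,0,0; 0,0,0,0]

/-- `L_{−2e2} = E₃₂`. -/
def Lm2e2 : Matrix (Fin 4) (Fin 4) ℂ := !![0,0,0,0; 0,0,0,0; 0,1,0,0; 0,0,0,0]

/-- `diag(0,1,−1,0)`. -/
def D2 : Matrix (Fin 4) (Fin 4) ℂ := !![0,0,0,0; 0,1,0,0; 0,0,-1,0; 0,0,0,0]

section Aux

/-- The six spanning matrices as a family. -/
def fam6 : Fin 6 → Matrix (Fin 4) (Fin 4) ℂ :=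
  ![D2, L2e1, Le1pe2, L2e2, Lm2e2, Le1me2]

lemma range_fam6 :
    Set.range fam6 = ({D2, L2e1, Le1pe2, L2e2, Lm2e2, Le1me2} :
      Set (Matrix (Fin 4) (Fin 4) ℂ)) := by
  ext A
  simp only [Set.mem_range, Set.mem_insert_iff, Set.mem_singleton_iff]
  constructor
  · rintro ⟨i, rfl⟩
    fin_cases i
    exacts [Or.inl rfl, Or.inr (Or.inl rfl), Or.inr (Or.inr (Or.inl rfl)),
      Or.inr (Or.inr (Or.inr (Or.inl rfl))),
      Or.inr (Or.inr (Or.inr (Or.inr (Or.inl rfl)))),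
      Or.inr (Or.inr (Or.inr (Or.inr (Or.inr rfl))))]
  · rintro (rfl|rfl|rfl|rfl|rfl|rfl)
    exacts [⟨0, rfl⟩, ⟨1, rfl⟩, ⟨2, rfl⟩, ⟨3, rfl⟩, ⟨4, rfl⟩, ⟨5, rfl⟩]

lemma fam6_zero : fam6 0 = D2 := rfl
lemma fam6_one : fam6 1 = L2e1 := rfl
lemma fam6_two : fam6 2 = Le1pe2 := rfl
lemma fam6_three : fam6 3 = L2e2 := rfl
lemma fam6_four : fam6 4 = Lm2e2 := rfl
lemma fam6_five : fam6 5 = Le1me2 := rfl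

lemma fam6_li : LinearIndependent ℂ fam6 := by
  rw [Fintype.linearIndependent_iff]
  intro g hg
  rw [Fin.sum_univ_six, fam6_zero, fam6_one, fam6_two, fam6_three, fam6_four,
    fam6_five] at hg
  have h := fun i j => congrFun (congrFun hg i) j
  simp only [Matrix.add_apply, Matrix.smul_apply, Matrix.zero_apply,
    smul_eq_mul] at h
  have h0 := h 1 1
  have h1 := h 0 3
  have h2 := h 0 2
  have h3 := h 1 2
  have h4 := h 2 1
  have h5 := h 0 1
  simp [D2, L2e1, Le1pe2, L2e2, Lm2e2, Le1me2, Matrix.vecHead,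
    Matrix.vecTail] at h0 h1 h2 h3 h4 h5
  intro i
  fin_cases i
  exacts [h0, h1, h2, h3, h4, h5]

end Aux


/-- The nilpotent element `N₂ = E₁₄` as a named constant. -/
def N14 : Matrix (Fin 4) (Fin 4) ℂ := !![0,0,0,1; 0,0,0,0; 0,0,0,0; 0,0,0,0]

lemma gen_D2 : D2 ∈ sp4 ∧ N14 * D2 - D2 * N14 = 0 := by
  refine ⟨?_, ?_⟩
  · rw [sp4, Set.mem_setOf_eq]; ext i j; fin_cases i <;> fin_cases j <;>
      simp [J4, N14, D2, Matrix.mul_apply, Fin.sum_univ_four] <;>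
      simp [Matrix.vecHead, Matrix.vecTail]
  · ext i j; fin_cases i <;> fin_cases j <;>
      simp [N14, D2, Matrix.mul_apply, Fin.sum_univ_four] <;>
      simp [Matrix.vecHead, Matrix.vecTail]

lemma gen_L2e1 : L2e1 ∈ sp4 ∧ N14 * L2e1 - L2e1 * N14 = 0 := by
  refine ⟨?_, ?_⟩
  · rw [sp4, Set.mem_setOf_eq]; ext i j; fin_cases i <;> fin_cases j <;>
      simp [J4, N14, L2e1, Matrix.mul_apply, Fin.sum_univ_four] <;>
      simp [Matrix.vecHead, Matrix.vecTail]
  · ext i j; fin_cases i <;> fin_cases j <;>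
      simp [N14, L2e1, Matrix.mul_apply, Fin.sum_univ_four] <;>
      simp [Matrix.vecHead, Matrix.vecTail]

lemma gen_Le1pe2 : Le1pe2 ∈ sp4 ∧ N14 * Le1pe2 - Le1pe2 * N14 = 0 := by
  refine ⟨?_, ?_⟩
  · rw [sp4, Set.mem_setOf_eq]; ext i j; fin_cases i <;> fin_cases j <;>
      simp [J4, N14, Le1pe2, Matrix.mul_apply, Fin.sum_univ_four] <;>
      simp [Matrix.vecHead, Matrix.vecTail]
  · ext i j; fin_cases i <;> fin_cases j <;>
      simp [N14, Le1pe2, Matrix.mul_apply, Fin.sum_univ_four] <;>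
      simp [Matrix.vecHead, Matrix.vecTail]

lemma gen_L2e2 : L2e2 ∈ sp4 ∧ N14 * L2e2 - L2e2 * N14 = 0 := by
  refine ⟨?_, ?_⟩
  · rw [sp4, Set.mem_setOf_eq]; ext i j; fin_cases i <;> fin_cases j <;>
      simp [J4, N14, L2e2, Matrix.mul_apply, Fin.sum_univ_four] <;>
      simp [Matrix.vecHead, Matrix.vecTail]
  · ext i j; fin_cases i <;> fin_cases j <;>
      simp [N14, L2e2, Matrix.mul_apply, Fin.sum_univ_four] <;>
      simp [Matrix.vecHead, Matrix.vecTail]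

lemma gen_Lm2e2 : Lm2e2 ∈ sp4 ∧ N14 * Lm2e2 - Lm2e2 * N14 = 0 := by
  refine ⟨?_, ?_⟩
  · rw [sp4, Set.mem_setOf_eq]; ext i j; fin_cases i <;> fin_cases j <;>
      simp [J4, N14, Lm2e2, Matrix.mul_apply, Fin.sum_univ_four] <;>
      simp [Matrix.vecHead, Matrix.vecTail]
  · ext i j; fin_cases i <;> fin_cases j <;>
      simp [N14, Lm2e2, Matrix.mul_apply, Fin.sum_univ_four] <;>
      simp [Matrix.vecHead, Matrix.vecTail]

lemma gen_Le1me2 : Le1me2 ∈ sp4 ∧ N14 * Le1me2 - Le1me2 * N14 = 0 := by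
  refine ⟨?_, ?_⟩
  · rw [sp4, Set.mem_setOf_eq]; ext i j; fin_cases i <;> fin_cases j <;>
      simp [J4, N14, Le1me2, Matrix.mul_apply, Fin.sum_univ_four] <;>
      simp [Matrix.vecHead, Matrix.vecTail]
  · ext i j; fin_cases i <;> fin_cases j <;>
      simp [N14, Le1me2, Matrix.mul_apply, Fin.sum_univ_four] <;>
      simp [Matrix.vecHead, Matrix.vecTail]

lemma gen_prop (A : Matrix (Fin 4) (Fin 4) ℂ)
    (hA : A ∈ ({D2, L2e1, Le1pe2, L2e2, Lm2e2, Le1me2} :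
      Set (Matrix (Fin 4) (Fin 4) ℂ))) :
    A ∈ sp4 ∧ N14 * A - A * N14 = 0 := by
  simp only [Set.mem_insert_iff, Set.mem_singleton_iff] at hA
  rcases hA with h|h|h|h|h|h <;> subst h
  exacts [gen_D2, gen_L2e1, gen_Le1pe2, gen_L2e2, gen_Lm2e2, gen_Le1me2]

lemma span_subset_prop (X : Matrix (Fin 4) (Fin 4) ℂ)
    (hX : X ∈ Submodule.span ℂ ({D2, L2e1, Le1pe2, L2e2, Lm2e2, Le1me2} :
      Set (Matrix (Fin 4) (Fin 4) ℂ))) :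
    X ∈ sp4 ∧ N14 * X - X * N14 = 0 := by
  refine Submodule.span_induction gen_prop ?_ ?_ ?_ hX
  · exact ⟨by rw [sp4, Set.mem_setOf_eq]; simp, by simp⟩
  · rintro A B - - ⟨hA1, hA2⟩ ⟨hB1, hB2⟩
    rw [sp4, Set.mem_setOf_eq] at hA1 hB1
    refine ⟨?_, ?_⟩
    · rw [sp4, Set.mem_setOf_eq, Matrix.transpose_add, add_mul, mul_add]
      calc Aᵀ * J4 + Bᵀ * J4 + (J4 * A + J4 * B)
          = (Aᵀ * J4 + J4 * A) + (Bᵀ * J4 + J4 * B) := by abel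
        _ = 0 := by rw [hA1, hB1, add_zero]
    · rw [mul_add, add_mul]
      calc N14 * A + N14 * B - (A * N14 + B * N14)
          = (N14 * A - A * N14) + (N14 * B - B * N14) := by abel
        _ = 0 := by rw [hA2, hB2, add_zero]
  · rintro c A - ⟨hA1, hA2⟩
    rw [sp4, Set.mem_setOf_eq] at hA1
    refine ⟨?_, ?_⟩
    · rw [sp4, Set.mem_setOf_eq, Matrix.transpose_smul, Matrix.smul_mul,
        Matrix.mul_smul, ← smul_add, hA1, smul_zero]
    · rw [Matrix.mul_smul, Matrix.smul_mul, ← smul_sub, hA2, smul_zero]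

lemma entries_mem_span (X : Matrix (Fin 4) (Fin 4) ℂ)
    (c10 : X 1 0 = 0) (c20 : X 2 0 = 0) (c30 : X 3 0 = 0) (c31 : X 3 1 = 0)
    (c32 : X 3 2 = 0) (c00 : X 0 0 = 0) (c33 : X 3 3 = 0)
    (c13 : X 1 3 = X 0 2) (c23 : X 2 3 = -(X 0 1)) (c22 : X 2 2 = -(X 1 1)) :
    X ∈ Submodule.span ℂ ({D2, L2e1, Le1pe2, L2e2, Lm2e2, Le1me2} :
      Set (Matrix (Fin 4) (Fin 4) ℂ)) := by
  have hXeq : X = X 1 1 • D2 + X 0 3 • L2e1 + X 0 2 • Le1pe2 +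
      X 1 2 • L2e2 + X 2 1 • Lm2e2 + X 0 1 • Le1me2 := by
    ext i j
    fin_cases i <;> fin_cases j <;>
      simp [D2, L2e1, Le1pe2, L2e2, Lm2e2, Le1me2, c10, c20, c30, c31,
        c32, c00, c33, c13, c23, c22] <;>
      simp [Matrix.vecHead, Matrix.vecTail]
  rw [hXeq]
  refine add_mem (add_mem (add_mem (add_mem (add_mem ?_ ?_) ?_) ?_) ?_) ?_ <;>
    exact Submodule.smul_mem _ _ (Submodule.subset_span (by simp))

lemma prop_mem_span (X : Matrix (Fin 4) (Fin 4) ℂ)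
    (h1 : X ∈ sp4) (h2 : N14 * X - X * N14 = 0) :
    X ∈ Submodule.span ℂ ({D2, L2e1, Le1pe2, L2e2, Lm2e2, Le1me2} :
      Set (Matrix (Fin 4) (Fin 4) ℂ)) := by
  rw [sp4, Set.mem_setOf_eq] at h1
  have E1 := fun i j => congrFun (congrFun h1 i) j
  have E2 := fun i j => congrFun (congrFun h2 i) j
  simp only [J4, N14, Matrix.add_apply, Matrix.sub_apply, Matrix.mul_apply,
    Matrix.transpose_apply, Fin.sum_univ_four, Matrix.zero_apply,
    Matrix.cons_val_zero, Matrix.cons_val_one, Matrix.cons_val_two,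
    Matrix.cons_val_three, Matrix.head_cons, Matrix.tail_cons,
    Matrix.head_fin_const, Matrix.vecHead, Matrix.vecTail] at E1 E2
  have c10 : X 1 0 = 0 := by have := E2 1 3; simp [Matrix.vecHead, Matrix.vecTail] at this; linear_combination this
  have c20 : X 2 0 = 0 := by have := E2 2 3; simp [Matrix.vecHead, Matrix.vecTail] at this; linear_combination this
  have c30 : X 3 0 = 0 := by have := E2 3 3; simp [Matrix.vecHead, Matrix.vecTail] at this; linear_combination this
  have c31 : X 3 1 = 0 := by have := E2 0 1; simp [Matrix.vecHead, Matrix.vecTail] at this; linear_combination this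
  have c32 : X 3 2 = 0 := by have := E2 0 2; simp [Matrix.vecHead, Matrix.vecTail] at this; linear_combination this
  have c33' : X 3 3 = X 0 0 := by have := E2 0 3; simp [Matrix.vecHead, Matrix.vecTail] at this; linear_combination this
  have c00 : X 0 0 = 0 := by
    have := E1 0 3; simp [Matrix.vecHead, Matrix.vecTail] at this
    rw [c33'] at this; linear_combination this / 2
  have c33 : X 3 3 = 0 := by rw [c33', c00]
  have c13 : X 1 3 = X 0 2 := by have := E1 3 2; simp [Matrix.vecHead, Matrix.vecTail] at this; linear_combination this
  have c23 : X 2 3 = -(X 0 1) := by have := E1 3 1; simp [Matrix.vecHead, Matrix.vecTail] at this; linear_combination -this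
  have c22 : X 2 2 = -(X 1 1) := by have := E1 2 1; simp [Matrix.vecHead, Matrix.vecTail] at this; linear_combination -this
  exact entries_mem_span X c10 c20 c30 c31 c32 c00 c33 c13 c23 c22

/-- The centralizer of `N₂ = E₁₄` in `sp(4,ℂ)` is the 6-dimensional span of
`diag(0,1,−1,0)`, `L_{2e1}`, `L_{e1+e2}`, `L_{2e2}`, `L_{−2e2}`, `L_{e1−e2}`. -/
theorem stmt6 :
    let N₂ : Matrix (Fin 4) (Fin 4) ℂ := !![0,0,0,1; 0,0,0,0; 0,0,0,0; 0,0,0,0]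
    {X | X ∈ sp4 ∧ N₂ * X - X * N₂ = 0} =
      ↑(Submodule.span ℂ
        ({D2, L2e1, Le1pe2, L2e2, Lm2e2, Le1me2} : Set (Matrix (Fin 4) (Fin 4) ℂ))) ∧
    Module.finrank ℂ ↥(Submodule.span ℂ
        ({D2, L2e1, Le1pe2, L2e2, Lm2e2, Le1me2} : Set (Matrix (Fin 4) (Fin 4) ℂ))) = 6 := by
  intro N₂
  have hN : N₂ = N14 := rfl
  constructor
  · ext X
    simp only [Set.mem_setOf_eq, SetLike.mem_coe, hN]
    exact ⟨fun h => prop_mem_span X h.1 h.2, fun h => span_subset_prop X h⟩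
  · rw [← range_fam6, finrank_span_eq_card fam6_li]
    simp
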